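/- arXiv:2412.11798 — 7 statements merged into one kernel-verified Lean document; each statement's English description precedes it below -/
import Mathlib

section
/- For every v ∈ V' and every φ ∈ W, the weak consistency error δ(v, φ) := (v, R φ) − (C v, φ) satisfies |δ(v, φ)| ≤ inf over v_c ∈ V_c and Φ ∈ W_h of (‖T(v − v_c)‖² + ‖S C(v − v_c)‖²)^{1/2} · (‖S⁻¹(φ − Φ)‖² + ‖T⁻¹ R(φ − Φ)‖²)^{1/2}. -/
open scoped RealInnerProductSpace

/-- **Weak consistency of the discrete curl (abstract form).**
For all `v ∈ V'` and `φ ∈ W`, the weak consistency error `δ(v, φ) := (v, R φ) − (C v, φ)`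
is bounded by the infimum over `v_c ∈ V_c`, `Φ ∈ W_h` of
`(‖T(v − v_c)‖² + ‖S C(v − v_c)‖²)^{1/2} · (‖S⁻¹(φ − Φ)‖² + ‖T⁻¹ R(φ − Φ)‖²)^{1/2}`,
i.e. it is bounded by each such product. -/
theorem weak_consistency_discrete_curl
    {H : Type*} [NormedAddCommGroup H] [InnerProductSpace ℝ H]
    (V' Vc W Wh : Submodule ℝ H) (hVc : Vc ≤ V') (hWh : Wh ≤ W)
    (C R : H →ₗ[ℝ] H)
    (hibp₁ : ∀ v ∈ V', ∀ Φ ∈ Wh, ⟪v, R Φ⟫ = ⟪C v, Φ⟫)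
    (hibp₂ : ∀ v ∈ Vc, ∀ ζ ∈ W, ⟪v, R ζ⟫ = ⟪C v, ζ⟫)
    (T S : H ≃ₗ[ℝ] H)
    (hT : ∀ u w : H, ⟪T u, w⟫ = ⟪u, T w⟫)
    (hS : ∀ u w : H, ⟪S u, w⟫ = ⟪u, S w⟫) :
    ∀ v ∈ V', ∀ φ ∈ W, ∀ vc ∈ Vc, ∀ Φ ∈ Wh,
      |⟪v, R φ⟫ - ⟪C v, φ⟫| ≤
        Real.sqrt (‖T (v - vc)‖ ^ 2 + ‖S (C (v - vc))‖ ^ 2) *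
          Real.sqrt (‖S.symm (φ - Φ)‖ ^ 2 + ‖T.symm (R (φ - Φ))‖ ^ 2) := by
  intro v hv φ hφ vc hvc Φ hΦ
  have h1 : ⟪v, R Φ⟫ = ⟪C v, Φ⟫ := hibp₁ v hv Φ hΦ
  have h2 : ⟪vc, R φ⟫ = ⟪C vc, φ⟫ := hibp₂ vc hvc φ hφ
  have h3 : ⟪vc, R Φ⟫ = ⟪C vc, Φ⟫ := hibp₁ vc (hVc hvc) Φ hΦ
  have key : ⟪v, R φ⟫ - ⟪C v, φ⟫
      = ⟪v - vc, R (φ - Φ)⟫ - ⟪C (v - vc), φ - Φ⟫ := by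
    simp only [map_sub, inner_sub_left, inner_sub_right]
    rw [h1, h2, h3]; ring
  set e := v - vc
  set η := φ - Φ
  have hTe : ⟪e, R η⟫ = ⟪T e, T.symm (R η)⟫ := by
    rw [hT e (T.symm (R η)), T.apply_symm_apply]
  have hSe : ⟪C e, η⟫ = ⟪S (C e), S.symm η⟫ := by
    rw [hS (C e) (S.symm η), S.apply_symm_apply]
  rw [key, hTe, hSe]
  have hb1 : |⟪T e, T.symm (R η)⟫| ≤ ‖T e‖ * ‖T.symm (R η)‖ := abs_real_inner_le_norm _ _
  have hb2 : |⟪S (C e), S.symm η⟫| ≤ ‖S (C e)‖ * ‖S.symm η‖ := abs_real_inner_le_norm _ _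
  have htri : |⟪T e, T.symm (R η)⟫ - ⟪S (C e), S.symm η⟫|
      ≤ ‖T e‖ * ‖T.symm (R η)‖ + ‖S (C e)‖ * ‖S.symm η‖ :=
    (abs_sub _ _).trans (add_le_add hb1 hb2)
  refine htri.trans ?_
  set a := ‖T e‖; set b := ‖S (C e)‖; set c := ‖S.symm η‖; set d := ‖T.symm (R η)‖
  have ha : 0 ≤ a := norm_nonneg _
  have hb : 0 ≤ b := norm_nonneg _
  have hc : 0 ≤ c := norm_nonneg _
  have hd : 0 ≤ d := norm_nonneg _
  rw [← Real.sqrt_mul (by positivity)]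
  rw [show Real.sqrt ((a ^ 2 + b ^ 2) * (c ^ 2 + d ^ 2))
      = Real.sqrt ((a ^ 2 + b ^ 2) * (c ^ 2 + d ^ 2)) from rfl]
  have : a * d + b * c ≤ Real.sqrt ((a ^ 2 + b ^ 2) * (c ^ 2 + d ^ 2)) := by
    rw [show (a ^ 2 + b ^ 2) * (c ^ 2 + d ^ 2)
        = (a * d + b * c) ^ 2 + (a * c - b * d) ^ 2 by ring]
    calc a * d + b * c ≤ Real.sqrt ((a * d + b * c) ^ 2) := by
          rw [Real.sqrt_sq (by positivity)]
      _ ≤ _ := Real.sqrt_le_sqrt (by nlinarith [sq_nonneg (a * c - b * d)])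
  linarith
end

section
/- For every v ∈ V there exists w ∈ V with |||w||| ≤ (1 + 2 C_st) |||v||| and b(v, w) = |||v|||². Consequently, the inf-sup constant of b satisfies: inf over v ∈ V with |||v||| = 1 of sup over w ∈ V with |||w||| = 1 of |b(v,w)| is at least 1/(1 + 2 C_st). Moreover, if C_st is the smallest constant for which the stability hypothesis holds (i.e., C_st = sup over g ∈ L with (g,w)_L = 0 for all w ∈ K and ‖g‖_L = 1 of ω|||v_g|||) and 0 < C_st < ∞, then this inf-sup constant is at most 1/C_st. -/
open scoped RealInnerProductSpace

/-- The energy norm `|||v||| := (ω²‖v‖_L² + ‖C v‖_M²)^{1/2}`. -/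
noncomputable def tnorm {L M : Type*} [NormedAddCommGroup L] [InnerProductSpace ℝ L]
    [NormedAddCommGroup M] [InnerProductSpace ℝ M]
    (ω : ℝ) (C : L →ₗ[ℝ] M) (v : L) : ℝ :=
  Real.sqrt (ω ^ 2 * ‖v‖ ^ 2 + ‖C v‖ ^ 2)

lemma two_cs (a b c d : ℝ) : a*c + b*d ≤ Real.sqrt (a^2+b^2) * Real.sqrt (c^2+d^2) := by
  have hs := Real.sq_sqrt (show (0:ℝ) ≤ a^2+b^2 by positivity)
  have ht := Real.sq_sqrt (show (0:ℝ) ≤ c^2+d^2 by positivity)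
  have hs0 := Real.sqrt_nonneg (a^2+b^2)
  have ht0 := Real.sqrt_nonneg (c^2+d^2)
  nlinarith [sq_nonneg (a*d - b*c), mul_nonneg hs0 ht0,
    sq_nonneg (Real.sqrt (a^2+b^2)*Real.sqrt (c^2+d^2) + (a*c+b*d))]

section
variable {L M : Type*} [NormedAddCommGroup L] [InnerProductSpace ℝ L]
    [NormedAddCommGroup M] [InnerProductSpace ℝ M]
    (ω : ℝ) (C : L →ₗ[ℝ] M)

lemma tnorm_nonneg (v : L) : 0 ≤ tnorm ω C v := Real.sqrt_nonneg _

lemma tnorm_sq (v : L) : tnorm ω C v ^ 2 = ω ^ 2 * ‖v‖ ^ 2 + ‖C v‖ ^ 2 :=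
  Real.sq_sqrt (by positivity)

lemma tnorm_smul (c : ℝ) (v : L) : tnorm ω C (c • v) = |c| * tnorm ω C v := by
  unfold tnorm
  rw [map_smul, norm_smul, norm_smul, show ω ^ 2 * (‖c‖*‖v‖) ^ 2 + (‖c‖*‖C v‖) ^ 2
    = c^2 * (ω ^ 2 * ‖v‖ ^ 2 + ‖C v‖ ^ 2) by rw [Real.norm_eq_abs, ← sq_abs c]; ring,
    Real.sqrt_mul (sq_nonneg c), Real.sqrt_sq_eq_abs]

lemma omega_norm_le_tnorm (hω : 0 ≤ ω) (v : L) : ω * ‖v‖ ≤ tnorm ω C v := by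
  rw [show ω * ‖v‖ = Real.sqrt ((ω*‖v‖)^2) by rw [Real.sqrt_sq (by positivity)]]
  apply Real.sqrt_le_sqrt; nlinarith [sq_nonneg (‖C v‖)]

lemma tnorm_cs (hω : 0 ≤ ω) (v w : L) :
    |(-ω ^ 2 * ⟪v, w⟫ + ⟪C v, C w⟫)| ≤ tnorm ω C v * tnorm ω C w := by
  have h1 := abs_real_inner_le_norm v w
  have h2 := abs_real_inner_le_norm (C v) (C w)
  have h3 : |(-ω ^ 2 * ⟪v, w⟫ + ⟪C v, C w⟫)| ≤ ω^2 * |⟪v,w⟫| + |⟪C v, C w⟫| := by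
    calc _ ≤ |(-ω ^ 2 * ⟪v, w⟫)| + |⟪C v, C w⟫| := abs_add_le _ _
    _ = ω^2 * |⟪v,w⟫| + |⟪C v, C w⟫| := by rw [abs_mul, abs_neg, abs_of_nonneg (by positivity : (0:ℝ) ≤ ω^2)]
  have h4 : ω^2 * |⟪v,w⟫| + |⟪C v, C w⟫| ≤ (ω*‖v‖)*(ω*‖w‖) + ‖C v‖*‖C w‖ := by
    have := abs_nonneg (⟪v,w⟫)
    nlinarith [sq_nonneg ω]
  have h5 := two_cs (ω*‖v‖) ‖C v‖ (ω*‖w‖) ‖C w‖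
  unfold tnorm
  calc _ ≤ _ := h3
  _ ≤ _ := h4
  _ ≤ _ := h5
  _ = _ := by rw [mul_pow, mul_pow]

lemma tnorm_add_le (hω : 0 ≤ ω) (u w : L) :
    tnorm ω C (u + w) ≤ tnorm ω C u + tnorm ω C w := by
  have hs := tnorm_sq ω C u
  have ht := tnorm_sq ω C w
  have hs0 := tnorm_nonneg ω C u
  have ht0 := tnorm_nonneg ω C w
  have key := two_cs (ω*‖u‖) ‖C u‖ (ω*‖w‖) ‖C w‖
  have hkey : (ω*‖u‖)*(ω*‖w‖) + ‖C u‖*‖C w‖ ≤ tnorm ω C u * tnorm ω C w := by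
    calc _ ≤ _ := key
    _ = _ := by unfold tnorm; rw [mul_pow, mul_pow]
  have h1 : ‖u + w‖ ≤ ‖u‖ + ‖w‖ := norm_add_le u w
  have h2 : ‖C (u+w)‖ ≤ ‖C u‖ + ‖C w‖ := by rw [map_add]; exact norm_add_le _ _
  rw [show tnorm ω C u + tnorm ω C w = Real.sqrt ((tnorm ω C u + tnorm ω C w)^2) by
    rw [Real.sqrt_sq (by positivity)]]
  apply Real.sqrt_le_sqrt
  have e1 : ‖u+w‖^2 ≤ (‖u‖+‖w‖)^2 := by nlinarith [norm_nonneg (u+w), norm_nonneg u, norm_nonneg w]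
  have e2 : ‖C (u+w)‖^2 ≤ (‖C u‖+‖C w‖)^2 := by nlinarith [norm_nonneg (C (u+w)), norm_nonneg (C u), norm_nonneg (C w)]
  nlinarith [mul_le_mul_of_nonneg_left e1 (sq_nonneg ω), e2, hkey]

lemma tnorm_eq_zero (hω : 0 < ω) {v : L} (h : tnorm ω C v = 0) : v = 0 := by
  have := Real.sqrt_eq_zero (by positivity : (0:ℝ) ≤ ω ^ 2 * ‖v‖ ^ 2 + ‖C v‖ ^ 2) |>.mp h
  have hv : ‖v‖ = 0 := by
    by_contra hne
    have h1 : 0 < ‖v‖ := lt_of_le_of_ne (norm_nonneg v) (Ne.symm hne)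
    have h2 : 0 < ω ^ 2 * ‖v‖ ^ 2 := by positivity
    nlinarith [sq_nonneg (‖C v‖)]
  exact norm_eq_zero.mp hv

end

/-- **Inf-sup stability of the continuous problem (abstract form).**
(a) For every `v ∈ V` there is `w ∈ V` with `|||w||| ≤ (1 + 2 C_st) |||v|||` and
`b(v, w) = |||v|||²`. (b) Consequently, for every unit vector `v ∈ V`,
`sup_{w ∈ V, |||w||| = 1} |b(v, w)| ≥ 1/(1 + 2 C_st)`, i.e. the inf-sup constant is at
least `1/(1 + 2 C_st)`. (c) If moreover `C_st` is the smallest constant for which the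
stability hypothesis holds and `0 < C_st`, then the inf-sup constant is at most
`1/C_st`. -/
theorem inf_sup_stability_continuous
    {L M : Type*} [NormedAddCommGroup L] [InnerProductSpace ℝ L]
    [NormedAddCommGroup M] [InnerProductSpace ℝ M]
    (ω : ℝ) (hω : 0 < ω)
    (V : Submodule ℝ L) (C : L →ₗ[ℝ] M)
    (projK : L →ₗ[ℝ] L)
    (hprojK_mem : ∀ v : L, projK v ∈ V ∧ C (projK v) = 0)
    (hprojK_orth : ∀ v : L, ∀ w ∈ V, C w = 0 → ⟪v - projK v, w⟫ = 0)
    (Cst : ℝ) (hCst : 0 ≤ Cst)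
    (hstab : ∀ g : L, (∀ w ∈ V, C w = 0 → ⟪g, w⟫ = 0) →
      ∃ vg ∈ V, (∀ w ∈ V, -ω ^ 2 * ⟪vg, w⟫ + ⟪C vg, C w⟫ = ⟪g, w⟫) ∧
        ω * tnorm ω C vg ≤ Cst * ‖g‖) :
    (∀ v ∈ V, ∃ w ∈ V, tnorm ω C w ≤ (1 + 2 * Cst) * tnorm ω C v ∧
      -ω ^ 2 * ⟪v, w⟫ + ⟪C v, C w⟫ = ω ^ 2 * ‖v‖ ^ 2 + ‖C v‖ ^ 2) ∧
    (∀ v ∈ V, tnorm ω C v = 1 →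
      1 / (1 + 2 * Cst) ≤
        sSup {t : ℝ | ∃ w ∈ V, tnorm ω C w = 1 ∧
          t = |(-ω ^ 2 * ⟪v, w⟫ + ⟪C v, C w⟫)|}) ∧
    ((∀ Cst' : ℝ, 0 ≤ Cst' →
        (∀ g : L, (∀ w ∈ V, C w = 0 → ⟪g, w⟫ = 0) →
          ∃ vg ∈ V, (∀ w ∈ V, -ω ^ 2 * ⟪vg, w⟫ + ⟪C vg, C w⟫ = ⟪g, w⟫) ∧
            ω * tnorm ω C vg ≤ Cst' * ‖g‖) →
        Cst ≤ Cst') →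
      0 < Cst →
      sInf {r : ℝ | ∃ v ∈ V, tnorm ω C v = 1 ∧
        r = sSup {t : ℝ | ∃ w ∈ V, tnorm ω C w = 1 ∧
          t = |(-ω ^ 2 * ⟪v, w⟫ + ⟪C v, C w⟫)|}} ≤ 1 / Cst) := by
  have hω0 : (0:ℝ) ≤ ω := le_of_lt hω
  -- Part (a)
  have parta : ∀ v ∈ V, ∃ w ∈ V, tnorm ω C w ≤ (1 + 2 * Cst) * tnorm ω C v ∧
      -ω ^ 2 * ⟪v, w⟫ + ⟪C v, C w⟫ = ω ^ 2 * ‖v‖ ^ 2 + ‖C v‖ ^ 2 := by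
    intro v hv
    obtain ⟨hv0V, hCv0⟩ := hprojK_mem v
    set v0 := projK v with hv0def
    set vb := v - v0 with hvbdef
    have hvbV : vb ∈ V := V.sub_mem hv hv0V
    have horth : ⟪vb, v0⟫ = 0 := hprojK_orth v v0 hv0V hCv0
    have horth' : ⟪v0, vb⟫ = 0 := by rw [real_inner_comm]; exact horth
    have hCvb : C vb = C v := by rw [hvbdef, map_sub, hCv0, sub_zero]
    have hvsum : v = v0 + vb := by rw [hvbdef]; abel
    have hnormsq : ‖v‖ ^ 2 = ‖v0‖ ^ 2 + ‖vb‖ ^ 2 := by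
      rw [hvsum, @norm_add_sq_real, horth']; ring
    have hgorth : ∀ w ∈ V, C w = 0 → ⟪(2*ω^2) • vb, w⟫ = 0 := by
      intro w hw hCw
      rw [real_inner_smul_left, hprojK_orth v w hw hCw, mul_zero]
    obtain ⟨z, hzV, hzb, hzbound⟩ := hstab ((2*ω^2) • vb) hgorth
    refine ⟨vb - v0 + z, V.add_mem (V.sub_mem hvbV hv0V) hzV, ?_, ?_⟩
    · -- norm bound
      have h1 : tnorm ω C (vb - v0) = tnorm ω C v := by
        unfold tnorm
        rw [map_sub, hCvb, hCv0, sub_zero,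
          show ‖vb - v0‖ ^ 2 = ‖v‖ ^ 2 by rw [@norm_sub_sq_real, horth, hnormsq]; ring]
      have h2 : ‖(2*ω^2) • vb‖ = 2*ω^2*‖vb‖ := by
        rw [norm_smul, Real.norm_eq_abs, abs_of_nonneg (by positivity)]
      have h3 : ω * ‖vb‖ ≤ tnorm ω C v := by
        have : ‖vb‖ ≤ ‖v‖ := by nlinarith [norm_nonneg vb, norm_nonneg v, sq_nonneg ‖v0‖]
        calc ω * ‖vb‖ ≤ ω * ‖v‖ := by nlinarith
        _ ≤ tnorm ω C v := omega_norm_le_tnorm ω C hω0 v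
      have h4 : tnorm ω C z ≤ 2 * Cst * tnorm ω C v := by
        rw [h2] at hzbound
        have : ω * tnorm ω C z ≤ ω * (2 * Cst * tnorm ω C v) := by
          nlinarith [mul_le_mul_of_nonneg_left h3 (by positivity : (0:ℝ) ≤ 2*Cst*ω)]
        exact le_of_mul_le_mul_left this hω
      calc tnorm ω C (vb - v0 + z) ≤ tnorm ω C (vb - v0) + tnorm ω C z :=
            tnorm_add_le ω C hω0 _ _
      _ ≤ tnorm ω C v + 2 * Cst * tnorm ω C v := by rw [h1]; linarith
      _ = (1 + 2 * Cst) * tnorm ω C v := by ring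
    · -- b identity
      have hbz : -ω ^ 2 * ⟪v, z⟫ + ⟪C v, C z⟫ = 2*ω^2 * ‖vb‖^2 := by
        have := hzb v hv
        rw [real_inner_smul_left] at this
        have hvvb : ⟪vb, v⟫ = ‖vb‖^2 := by
          rw [hvsum, inner_add_right, horth, real_inner_self_eq_norm_sq]; ring
        have s1 : ⟪v,z⟫ = ⟪z,v⟫ := real_inner_comm z v
        have s2 : ⟪C v, C z⟫ = ⟪C z, C v⟫ := real_inner_comm _ _
        linear_combination this - ω^2 * s1 + s2 + 2*ω^2*hvvb
      have hvvb' : ⟪v, vb⟫ = ‖vb‖^2 := by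
        rw [hvsum, inner_add_left, horth', real_inner_self_eq_norm_sq]; ring
      have hvv0 : ⟪v, v0⟫ = ‖v0‖^2 := by
        rw [hvsum, inner_add_left, horth, real_inner_self_eq_norm_sq]; ring
      rw [inner_add_right, inner_sub_right, map_add, map_sub, hCvb, hCv0, sub_zero,
        inner_add_right, hvvb', hvv0, real_inner_self_eq_norm_sq]
      rw [show ⟪C v, C z⟫ = 2*ω^2 * ‖vb‖^2 + ω ^ 2 * ⟪v, z⟫ by linarith [hbz]]
      rw [hnormsq]; ring
  refine ⟨parta, ?_, ?_⟩
  · -- Part (b)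
    intro v hv hv1
    obtain ⟨w, hwV, hwle, hbw⟩ := parta v hv
    have hb1 : -ω ^ 2 * ⟪v, w⟫ + ⟪C v, C w⟫ = 1 := by
      rw [hbw, ← tnorm_sq ω C v, hv1]; norm_num
    have hcs := tnorm_cs ω C hω0 v w
    have htw : 1 ≤ tnorm ω C w := by
      rw [hb1, hv1, one_mul] at hcs
      calc (1:ℝ) = |(1:ℝ)| := by norm_num
      _ ≤ _ := hcs
    have htwpos : 0 < tnorm ω C w := lt_of_lt_of_le one_pos htw
    set c : ℝ := (tnorm ω C w)⁻¹ with hc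
    have hcpos : 0 < c := inv_pos.mpr htwpos
    have hw'V : c • w ∈ V := V.smul_mem c hwV
    have hw'1 : tnorm ω C (c • w) = 1 := by
      rw [tnorm_smul, abs_of_pos hcpos, hc, inv_mul_cancel₀ (ne_of_gt htwpos)]
    have hbw' : -ω ^ 2 * ⟪v, c • w⟫ + ⟪C v, C (c • w)⟫ = c := by
      rw [map_smul, real_inner_smul_right, real_inner_smul_right]
      calc -ω ^ 2 * (c * ⟪v, w⟫) + c * ⟪C v, C w⟫
          = c * (-ω ^ 2 * ⟪v, w⟫ + ⟪C v, C w⟫) := by ring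
      _ = c := by rw [hb1, mul_one]
    have hmem : c ∈ {t : ℝ | ∃ w ∈ V, tnorm ω C w = 1 ∧
        t = |(-ω ^ 2 * ⟪v, w⟫ + ⟪C v, C w⟫)|} := by
      exact ⟨c • w, hw'V, hw'1, by rw [hbw', abs_of_pos hcpos]⟩
    have hbdd : BddAbove {t : ℝ | ∃ w ∈ V, tnorm ω C w = 1 ∧
        t = |(-ω ^ 2 * ⟪v, w⟫ + ⟪C v, C w⟫)|} := by
      refine ⟨1, ?_⟩
      rintro t ⟨u, huV, hu1, rfl⟩
      calc |(-ω ^ 2 * ⟪v, u⟫ + ⟪C v, C u⟫)| ≤ tnorm ω C v * tnorm ω C u :=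
            tnorm_cs ω C hω0 v u
      _ = 1 := by rw [hv1, hu1, one_mul]
    have hcge : 1 / (1 + 2 * Cst) ≤ c := by
      have hle : tnorm ω C w ≤ 1 + 2 * Cst := by rw [hv1, mul_one] at hwle; exact hwle
      rw [hc, ← one_div]
      exact one_div_le_one_div_of_le htwpos hle
    calc 1 / (1 + 2 * Cst) ≤ c := hcge
    _ ≤ _ := le_csSup hbdd hmem
  · -- Part (c)
    intro hmin hCpos
    set S := {r : ℝ | ∃ v ∈ V, tnorm ω C v = 1 ∧
        r = sSup {t : ℝ | ∃ w ∈ V, tnorm ω C w = 1 ∧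
          t = |(-ω ^ 2 * ⟪v, w⟫ + ⟪C v, C w⟫)|}} with hS
    rcases le_or_gt (sInf S) 0 with h | h
    · have : (0:ℝ) < 1 / Cst := by positivity
      linarith
    · set γ := sInf S with hγ
      have hγinv : (0:ℝ) ≤ 1/γ := le_of_lt (one_div_pos.mpr h)
      have key : ∀ g : L, (∀ w ∈ V, C w = 0 → ⟪g, w⟫ = 0) →
          ∃ vg ∈ V, (∀ w ∈ V, -ω ^ 2 * ⟪vg, w⟫ + ⟪C vg, C w⟫ = ⟪g, w⟫) ∧
            ω * tnorm ω C vg ≤ (1/γ) * ‖g‖ := by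
        intro g hg
        obtain ⟨vg, hvgV, hvgb, _⟩ := hstab g hg
        refine ⟨vg, hvgV, hvgb, ?_⟩
        rcases eq_or_lt_of_le (tnorm_nonneg ω C vg) with h0 | h0
        · rw [← h0, mul_zero]
          exact mul_nonneg hγinv (norm_nonneg g)
        · set t := tnorm ω C vg with ht
          have hvV : t⁻¹ • vg ∈ V := V.smul_mem _ hvgV
          have h1 : tnorm ω C (t⁻¹ • vg) = 1 := by
            rw [tnorm_smul, abs_of_pos (inv_pos.mpr h0), ← ht,
              inv_mul_cancel₀ (ne_of_gt h0)]
          have hrS : sSup {t' : ℝ | ∃ w ∈ V, tnorm ω C w = 1 ∧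
              t' = |(-ω ^ 2 * ⟪t⁻¹ • vg, w⟫ + ⟪C (t⁻¹ • vg), C w⟫)|} ∈ S :=
            ⟨t⁻¹ • vg, hvV, h1, rfl⟩
          have hbddS : BddBelow S := by
            refine ⟨0, ?_⟩
            rintro r ⟨u, huV, hu1, rfl⟩
            apply Real.sSup_nonneg
            rintro x ⟨w, hwV, hw1, rfl⟩
            exact abs_nonneg _
          have hγle : γ ≤ sSup {t' : ℝ | ∃ w ∈ V, tnorm ω C w = 1 ∧
              t' = |(-ω ^ 2 * ⟪t⁻¹ • vg, w⟫ + ⟪C (t⁻¹ • vg), C w⟫)|} := csInf_le hbddS hrS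
          have hsup_le : sSup {t' : ℝ | ∃ w ∈ V, tnorm ω C w = 1 ∧
              t' = |(-ω ^ 2 * ⟪t⁻¹ • vg, w⟫ + ⟪C (t⁻¹ • vg), C w⟫)|} ≤ t⁻¹ * (‖g‖ / ω) := by
            apply Real.sSup_le
            · rintro x ⟨w, hwV, hw1, rfl⟩
              have hb : -ω ^ 2 * ⟪t⁻¹ • vg, w⟫ + ⟪C (t⁻¹ • vg), C w⟫ = t⁻¹ * ⟪g, w⟫ := by
                rw [map_smul, real_inner_smul_left, real_inner_smul_left, ← hvgb w hwV]
                ring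
              rw [hb, abs_mul, abs_of_pos (inv_pos.mpr h0)]
              have hgw : |⟪g, w⟫| ≤ ‖g‖ / ω := by
                have hcs := abs_real_inner_le_norm g w
                have hwn : ‖w‖ ≤ 1/ω := by
                  have h2 := omega_norm_le_tnorm ω C hω0 w
                  rw [hw1] at h2
                  rw [le_div_iff₀ hω]
                  linarith
                calc |⟪g, w⟫| ≤ ‖g‖ * ‖w‖ := hcs
                _ ≤ ‖g‖ * (1/ω) := mul_le_mul_of_nonneg_left hwn (norm_nonneg g)
                _ = ‖g‖ / ω := by ring
              exact mul_le_mul_of_nonneg_left hgw (le_of_lt (inv_pos.mpr h0))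
            · positivity
          have hfin : γ ≤ t⁻¹ * (‖g‖ / ω) := le_trans hγle hsup_le
          have hωt : 0 < ω * t := mul_pos hω h0
          have h2 : γ * (ω * t) ≤ ‖g‖ := by
            calc γ * (ω * t) ≤ (t⁻¹ * (‖g‖ / ω)) * (ω * t) :=
                  mul_le_mul_of_nonneg_right hfin (le_of_lt hωt)
            _ = ‖g‖ := by
                  field_simp
          rw [div_mul_eq_mul_div, one_mul, le_div_iff₀ h]
          nlinarith [h2]
      have hCle := hmin (1/γ) hγinv key
      have h3 : γ * Cst ≤ γ * (1/γ) := mul_le_mul_of_nonneg_left hCle (le_of_lt h)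
      rw [mul_one_div, div_self (ne_of_gt h)] at h3
      rw [le_div_iff₀ hCpos]
      exact h3
end

section
/- Let E ∈ V and E_h ∈ V_h, set e := E − E_h, and assume Galerkin orthogonality: b♯(e, v) = 0 for all v ∈ V_h^c. Then ω‖e − Π_K e‖_L ≤ γ_p |||e||| + γ_d |e|_nc. -/
open scoped RealInnerProductSpace

private lemma cs2 (a b c d : ℝ) (ha : 0 ≤ a) (hb : 0 ≤ b) (hc : 0 ≤ c) (hd : 0 ≤ d) :
    a * c + b * d ≤ Real.sqrt (a ^ 2 + b ^ 2) * Real.sqrt (c ^ 2 + d ^ 2) := by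
  have h1 : (0:ℝ) ≤ a ^ 2 + b ^ 2 := by positivity
  have h2 : (0:ℝ) ≤ c ^ 2 + d ^ 2 := by positivity
  have hs1 := Real.sq_sqrt h1
  have hs2 := Real.sq_sqrt h2
  have hn1 := Real.sqrt_nonneg (a ^ 2 + b ^ 2)
  have hn2 := Real.sqrt_nonneg (c ^ 2 + d ^ 2)
  nlinarith [sq_nonneg (a * d - b * c), mul_nonneg hn1 hn2,
    mul_nonneg (mul_nonneg ha hc) (mul_nonneg hb hd),
    sq_nonneg (Real.sqrt (a ^ 2 + b ^ 2) * Real.sqrt (c ^ 2 + d ^ 2) - (a * c + b * d))]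

set_option maxHeartbeats 1600000 in
/-- **Bound on the `K`-orthogonal error component (duality argument).**
Under Galerkin orthogonality on conforming test functions,
`ω ‖e − Π_K e‖_L ≤ γ_p |||e||| + γ_d |e|_nc` where `e := E − E_h`. -/
theorem bound_on_theta_zero
    {L M : Type*} [NormedAddCommGroup L] [InnerProductSpace ℝ L]
    [NormedAddCommGroup M] [InnerProductSpace ℝ M]
    (ω : ℝ) (hω : 0 < ω)
    (Vs V Vh : Submodule ℝ L) (hVVs : V ≤ Vs) (hVhVs : Vh ≤ Vs)
    (C : L →ₗ[ℝ] M)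
    (s : L →ₗ[ℝ] L →ₗ[ℝ] ℝ)
    (hs_symm : ∀ v w : L, s v w = s w v)
    (hs_pos : ∀ v : L, 0 ≤ s v v)
    (hs_conf : ∀ v w : L, v ∈ V ∨ w ∈ V → s v w = 0)
    (nc : L → ℝ)
    (hnc_nonneg : ∀ v : L, 0 ≤ nc v)
    (hnc_add : ∀ v w : L, nc (v + w) ≤ nc v + nc w)
    (hnc_smul : ∀ (c : ℝ) (v : L), nc (c • v) = |c| * nc v)
    (hnc_conf : ∀ v ∈ V, nc v = 0)
    (projK : L →ₗ[ℝ] L)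
    (hprojK_mem : ∀ v : L, projK v ∈ V ∧ C (projK v) = 0)
    (hprojK_orth : ∀ v : L, ∀ w ∈ V, C w = 0 → ⟪v - projK v, w⟫ = 0)
    (γp γd : ℝ) (hγp : 0 ≤ γp) (hγd : 0 ≤ γd)
    (hadj : ∀ θ : L, (∀ w ∈ V, C w = 0 → ⟪θ, w⟫ = 0) →
      ∃ ζ ∈ V, (∀ w ∈ V, -ω ^ 2 * ⟪w, ζ⟫ + ⟪C w, C ζ⟫ = ⟪w, θ⟫) ∧
        sInf {t : ℝ | ∃ v ∈ Vh ⊓ V, t = ω * tnorm ω C (ζ - v)} ≤ γp * ‖θ‖ ∧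
        ∀ wh ∈ Vh,
          ω * |⟪wh, θ⟫ - (-ω ^ 2 * ⟪wh, ζ⟫ + ⟪C wh, C ζ⟫ + s wh ζ)| ≤
            γd * ‖θ‖ * nc wh)
    (E : L) (hE : E ∈ V) (Eh : L) (hEh : Eh ∈ Vh)
    (hGO : ∀ v ∈ Vh ⊓ V,
      -ω ^ 2 * ⟪E - Eh, v⟫ + ⟪C (E - Eh), C v⟫ + s (E - Eh) v = 0) :
    ω * ‖(E - Eh) - projK (E - Eh)‖ ≤
      γp * tnorm ω C (E - Eh) + γd * nc (E - Eh) := by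
  set e := E - Eh with he
  set θ := e - projK e with hθ
  clear_value θ e
  have hθorth : ∀ w ∈ V, C w = 0 → ⟪θ, w⟫ = 0 := fun w hw hcw => by
    rw [hθ]; exact hprojK_orth e w hw hcw
  obtain ⟨ζ, hζV, hζb, hζinf, hζd⟩ := hadj θ hθorth
  -- ⟪e, θ⟫ = ‖θ‖²
  have horth : ⟪θ, projK e⟫ = 0 := by
    rw [hθ]; exact hprojK_orth e (projK e) (hprojK_mem e).1 (hprojK_mem e).2
  have heθ : ⟪e, θ⟫ = ‖θ‖ ^ 2 := by
    have hsum : e = θ + projK e := by rw [hθ]; abel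
    calc ⟪e, θ⟫ = ⟪θ + projK e, θ⟫ := by rw [← hsum]
      _ = ⟪θ, θ⟫ + ⟪projK e, θ⟫ := inner_add_left _ _ _
      _ = ‖θ‖ ^ 2 := by
          have horth' : ⟪projK e, θ⟫ = 0 := by rw [real_inner_comm]; exact horth
          rw [horth', real_inner_self_eq_norm_sq]; ring
  have htne : 0 ≤ tnorm ω C e := Real.sqrt_nonneg _
  -- defect identity
  have hsE : s E ζ = 0 := hs_conf E ζ (Or.inl hE)
  have hζbE := hζb E hE
  have hdef : ⟪e, θ⟫ - (-ω ^ 2 * ⟪e, ζ⟫ + ⟪C e, C ζ⟫ + s e ζ) =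
      -(⟪Eh, θ⟫ - (-ω ^ 2 * ⟪Eh, ζ⟫ + ⟪C Eh, C ζ⟫ + s Eh ζ)) := by
    simp only [he, inner_sub_left, map_sub, LinearMap.sub_apply]
    linear_combination -hζbE - hsE
  -- nc Eh ≤ nc e
  have hncEh : nc Eh ≤ nc e := by
    have h1 : Eh = E + (-1 : ℝ) • e := by rw [he]; module
    calc nc Eh = nc (E + (-1 : ℝ) • e) := by rw [← h1]
      _ ≤ nc E + nc ((-1 : ℝ) • e) := hnc_add _ _
      _ = nc e := by rw [hnc_conf E hE, hnc_smul]; simp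
  have key1 : ω * (⟪e, θ⟫ - (-ω ^ 2 * ⟪e, ζ⟫ + ⟪C e, C ζ⟫ + s e ζ)) ≤ γd * ‖θ‖ * nc e := by
    have h1 := hζd Eh hEh
    have h2 : γd * ‖θ‖ * nc Eh ≤ γd * ‖θ‖ * nc e :=
      mul_le_mul_of_nonneg_left hncEh (by positivity)
    have h3 : ω * (⟪e, θ⟫ - (-ω ^ 2 * ⟪e, ζ⟫ + ⟪C e, C ζ⟫ + s e ζ)) ≤
        ω * |⟪Eh, θ⟫ - (-ω ^ 2 * ⟪Eh, ζ⟫ + ⟪C Eh, C ζ⟫ + s Eh ζ)| := by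
      rw [hdef]
      have := neg_abs_le (⟪Eh, θ⟫ - (-ω ^ 2 * ⟪Eh, ζ⟫ + ⟪C Eh, C ζ⟫ + s Eh ζ))
      nlinarith
    linarith
  -- bound on b♯(e, ζ) via conforming approximation
  have key2 : ∀ v ∈ Vh ⊓ V, ω * (-ω ^ 2 * ⟪e, ζ⟫ + ⟪C e, C ζ⟫ + s e ζ) ≤
      tnorm ω C e * (ω * tnorm ω C (ζ - v)) := by
    intro v hv
    obtain ⟨hv1, hv2⟩ := Submodule.mem_inf.mp hv
    have hgo := hGO v hv
    have hseζ : s e ζ = 0 := hs_conf e ζ (Or.inr hζV)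
    have heq : -ω ^ 2 * ⟪e, ζ⟫ + ⟪C e, C ζ⟫ + s e ζ =
        -ω ^ 2 * ⟪e, ζ - v⟫ + ⟪C e, C (ζ - v)⟫ := by
      have hsev : s e v = 0 := hs_conf e v (Or.inr hv2)
      simp only [inner_sub_right, map_sub]
      rw [hseζ]
      rw [hsev] at hgo
      linear_combination hgo
    rw [heq]
    set u := ζ - v with hu
    have h1 := abs_real_inner_le_norm e u
    have h2 := abs_real_inner_le_norm (C e) (C u)
    have h1a := abs_le.mp h1
    have h2a := abs_le.mp h2
    have hcs := cs2 (ω * ‖e‖) ‖C e‖ (ω * ‖u‖) ‖C u‖ (by positivity) (norm_nonneg _)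
      (by positivity) (norm_nonneg _)
    rw [show (ω * ‖e‖) ^ 2 = ω ^ 2 * ‖e‖ ^ 2 by ring,
        show (ω * ‖u‖) ^ 2 = ω ^ 2 * ‖u‖ ^ 2 by ring] at hcs
    have hb : -ω ^ 2 * ⟪e, u⟫ + ⟪C e, C u⟫ ≤ tnorm ω C e * tnorm ω C u := by
      have h1b : ω ^ 2 * (-⟪e, u⟫) ≤ ω ^ 2 * (‖e‖ * ‖u‖) :=
        mul_le_mul_of_nonneg_left (by linarith [h1a.1]) (sq_nonneg ω)
      unfold tnorm
      nlinarith [hcs, h1b, h2a.2]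
    calc ω * (-ω ^ 2 * ⟪e, u⟫ + ⟪C e, C u⟫) ≤ ω * (tnorm ω C e * tnorm ω C u) :=
          mul_le_mul_of_nonneg_left hb hω.le
      _ = tnorm ω C e * (ω * tnorm ω C u) := by ring
  -- pass to the infimum
  set S := {t : ℝ | ∃ v ∈ Vh ⊓ V, t = ω * tnorm ω C (ζ - v)} with hS
  have hSne : S.Nonempty := ⟨ω * tnorm ω C (ζ - 0), 0, Submodule.zero_mem _, rfl⟩
  have key2' : ω * (-ω ^ 2 * ⟪e, ζ⟫ + ⟪C e, C ζ⟫ + s e ζ) ≤ tnorm ω C e * sInf S := by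
    by_cases h0 : tnorm ω C e = 0
    · rw [h0, zero_mul]
      have := key2 0 (Submodule.zero_mem _)
      rw [h0] at this; linarith
    · have hpos : 0 < tnorm ω C e := lt_of_le_of_ne htne (Ne.symm h0)
      have hle : ω * (-ω ^ 2 * ⟪e, ζ⟫ + ⟪C e, C ζ⟫ + s e ζ) / tnorm ω C e ≤ sInf S := by
        apply le_csInf hSne
        rintro t ⟨v, hv, rfl⟩
        rw [div_le_iff₀ hpos]
        have := key2 v hv
        linarith [this]
      calc ω * (-ω ^ 2 * ⟪e, ζ⟫ + ⟪C e, C ζ⟫ + s e ζ)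
          = ω * (-ω ^ 2 * ⟪e, ζ⟫ + ⟪C e, C ζ⟫ + s e ζ) / tnorm ω C e * tnorm ω C e := by
            field_simp
        _ ≤ sInf S * tnorm ω C e := mul_le_mul_of_nonneg_right hle hpos.le
        _ = tnorm ω C e * sInf S := mul_comm _ _
  have hinf2 : tnorm ω C e * sInf S ≤ tnorm ω C e * (γp * ‖θ‖) :=
    mul_le_mul_of_nonneg_left hζinf htne
  -- combine
  have hfinal : ω * ‖θ‖ ^ 2 ≤ (γp * tnorm ω C e + γd * nc e) * ‖θ‖ := by
    have : ω * ⟪e, θ⟫ ≤ γd * ‖θ‖ * nc e + tnorm ω C e * (γp * ‖θ‖) := by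
      have hsplit : ω * ⟪e, θ⟫ =
          ω * (⟪e, θ⟫ - (-ω ^ 2 * ⟪e, ζ⟫ + ⟪C e, C ζ⟫ + s e ζ)) +
          ω * (-ω ^ 2 * ⟪e, ζ⟫ + ⟪C e, C ζ⟫ + s e ζ) := by ring
      rw [hsplit]
      linarith [key1, key2', hinf2]
    rw [heθ] at this
    have hrw : γd * ‖θ‖ * nc e + tnorm ω C e * (γp * ‖θ‖) =
        (γp * tnorm ω C e + γd * nc e) * ‖θ‖ := by ring
    linarith
  by_cases hz : ‖θ‖ = 0
  · rw [hz, mul_zero]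
    have h1 : 0 ≤ γp * tnorm ω C e := mul_nonneg hγp htne
    have h2 : 0 ≤ γd * nc e := mul_nonneg hγd (hnc_nonneg e)
    linarith
  · have hzpos : 0 < ‖θ‖ := lt_of_le_of_ne (norm_nonneg _) (Ne.symm hz)
    have := mul_le_mul_of_nonneg_right (le_refl (ω * ‖θ‖)) hzpos.le
    nlinarith [hfinal]
end

section
/- Let E ∈ V and E_h ∈ V_h, set e := E − E_h and η := E − P E, and assume (e, w)_L = 0 for all w ∈ K_h. Then ω‖Π_K e‖_L ≤ ω‖Π_K η‖_L + γ_div (‖C(P e)‖_M² + |P e|_nc²)^{1/2}. -/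
open scoped RealInnerProductSpace

/-- **Bound on the curl-free error component.**
If `(e, w)_L = 0` for all `w ∈ K_h`, then
`ω‖Π_K e‖_L ≤ ω‖Π_K η‖_L + γ_div (‖C(P e)‖_M² + |P e|_nc²)^{1/2}`,
where `e := E − E_h` and `η := E − P E`. -/
theorem bound_on_theta_pi
    {L M : Type*} [NormedAddCommGroup L] [InnerProductSpace ℝ L]
    [NormedAddCommGroup M] [InnerProductSpace ℝ M]
    (ω : ℝ) (hω : 0 < ω)
    (Vs V Vh : Submodule ℝ L) (hVVs : V ≤ Vs) (hVhVs : Vh ≤ Vs)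
    (C : L →ₗ[ℝ] M)
    (s : L →ₗ[ℝ] L →ₗ[ℝ] ℝ)
    (hs_symm : ∀ v w : L, s v w = s w v)
    (hs_pos : ∀ v : L, 0 ≤ s v v)
    (hs_conf : ∀ v w : L, v ∈ V ∨ w ∈ V → s v w = 0)
    (nc : L → ℝ)
    (hnc_nonneg : ∀ v : L, 0 ≤ nc v)
    (hnc_add : ∀ v w : L, nc (v + w) ≤ nc v + nc w)
    (hnc_smul : ∀ (c : ℝ) (v : L), nc (c • v) = |c| * nc v)
    (hnc_conf : ∀ v ∈ V, nc v = 0)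
    (projK : L →ₗ[ℝ] L)
    (hprojK_mem : ∀ v : L, projK v ∈ V ∧ C (projK v) = 0)
    (hprojK_orth : ∀ v : L, ∀ w ∈ V, C w = 0 → ⟪v - projK v, w⟫ = 0)
    (projKh : L →ₗ[ℝ] L)
    (hprojKh_mem : ∀ v : L, projKh v ∈ Vh ⊓ V ∧ C (projKh v) = 0)
    (hprojKh_orth : ∀ v : L, ∀ w ∈ Vh ⊓ V, C w = 0 → ⟪v - projKh v, w⟫ = 0)
    (γdiv : ℝ) (hγdiv : 0 ≤ γdiv)
    (hdiv : ∀ vh ∈ Vh, projKh vh = 0 →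
      ω * ‖projK vh‖ ≤ γdiv * Real.sqrt (‖C vh‖ ^ 2 + nc vh ^ 2))
    (P : L →ₗ[ℝ] L)
    (hP_mem : ∀ v : L, P v ∈ Vh)
    (hP_orth : ∀ v : L, ∀ wh ∈ Vh,
      ω ^ 2 * ⟪v - P v, wh⟫ + ⟪C (v - P v), C wh⟫ + s (v - P v) wh = 0)
    (E : L) (hE : E ∈ V) (Eh : L) (hEh : Eh ∈ Vh)
    (horth : ∀ w ∈ Vh ⊓ V, C w = 0 → ⟪E - Eh, w⟫ = 0) :
    ω * ‖projK (E - Eh)‖ ≤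
      ω * ‖projK (E - P E)‖ +
        γdiv * Real.sqrt (‖C (P (E - Eh))‖ ^ 2 + nc (P (E - Eh)) ^ 2) := by
  set e := E - Eh with he
  -- Step 1: P Eh = Eh
  have hPEh : P Eh = Eh := by
    have hd : Eh - P Eh ∈ Vh := Vh.sub_mem hEh (hP_mem Eh)
    have h0 := hP_orth Eh (Eh - P Eh) hd
    have h1 : (0:ℝ) ≤ ω ^ 2 * ⟪Eh - P Eh, Eh - P Eh⟫ :=
      mul_nonneg (by positivity) real_inner_self_nonneg
    have h2 : (0:ℝ) ≤ ⟪C (Eh - P Eh), C (Eh - P Eh)⟫ := real_inner_self_nonneg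
    have h3 := hs_pos (Eh - P Eh)
    have hz : ω ^ 2 * ⟪Eh - P Eh, Eh - P Eh⟫ = 0 := by linarith
    have hz2 : ⟪Eh - P Eh, Eh - P Eh⟫ = (0:ℝ) := by
      have hω2 : ω ^ 2 ≠ 0 := by positivity
      exact (mul_eq_zero.mp hz).resolve_left hω2
    have hsub : Eh - P Eh = 0 := inner_self_eq_zero.mp hz2
    exact (sub_eq_zero.mp hsub).symm
  -- Step 2: e - P e = E - P E
  have hsplit : e = (E - P E) + P e := by
    rw [he, map_sub, hPEh]; abel
  -- Step 3: inner product of P e with K_h elements vanishes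
  have hPe_orth : ∀ w ∈ Vh ⊓ V, C w = 0 → ⟪P e, w⟫ = 0 := by
    intro w hw hcw
    have hwVh : w ∈ Vh := hw.1
    have hwV : w ∈ V := hw.2
    have h0 := hP_orth e w hwVh
    have hsz : s (e - P e) w = 0 := hs_conf _ _ (Or.inr hwV)
    have hcz : ⟪C (e - P e), C w⟫ = (0:ℝ) := by rw [hcw]; simp
    have hiz : ⟪e - P e, w⟫ = (0:ℝ) := by
      have hω2 : ω ^ 2 ≠ 0 := by positivity
      have : ω ^ 2 * ⟪e - P e, w⟫ = 0 := by linarith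
      exact (mul_eq_zero.mp this).resolve_left hω2
    have hez : ⟪e, w⟫ = (0:ℝ) := horth w hw hcw
    have := inner_sub_left (𝕜 := ℝ) e (P e) w
    rw [hiz, hez] at this
    linarith
  -- Step 4: projKh (P e) = 0
  have hKh0 : projKh (P e) = 0 := by
    set k := projKh (P e) with hk
    obtain ⟨hkmem, hkC⟩ := hprojKh_mem (P e)
    have h1 := hprojKh_orth (P e) k hkmem hkC
    have h2 : ⟪P e, k⟫ = (0:ℝ) := hPe_orth k hkmem hkC
    have h3 := inner_sub_left (𝕜 := ℝ) (P e) k k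
    rw [h1, h2] at h3
    have : ⟪k, k⟫ = (0:ℝ) := by linarith
    exact inner_self_eq_zero.mp this
  -- Step 5: divergence bound
  have hdivPe := hdiv (P e) (hP_mem e) hKh0
  -- Step 6: triangle inequality
  have htri : ‖projK e‖ ≤ ‖projK (E - P E)‖ + ‖projK (P e)‖ := by
    have hpk : projK e = projK (E - P E) + projK (P e) := by
      nth_rewrite 1 [hsplit]; rw [map_add]
    rw [hpk]; exact norm_add_le _ _
  have := mul_le_mul_of_nonneg_left htri (le_of_lt hω)
  rw [mul_add] at this
  linarith
end

section
/- Let E ∈ V and E_h ∈ V_h; set e := E − E_h, η := E − P E and θ₀ := e − Π_K e. Assume Galerkin orthogonality b♯(e, v) = 0 for all v ∈ V_h^c and the weak-consistency bound |b♯(e, w_h)| ≤ D |w_h|_nc for all w_h ∈ V_h, where D ≥ 0. Then |||θ₀|||♯² ≤ |||η − Π_K η|||♯² + 2 ω‖Π_K e‖_L · γ_div (‖C(P e)‖_M² + |P e|_nc²)^{1/2} + 2 |P e|_nc · D + 4 ω² ‖θ₀‖_L². -/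
open scoped RealInnerProductSpace

set_option maxHeartbeats 2000000

/-- **Bound on the augmented energy norm of the `K`-orthogonal error component.**
Under Galerkin orthogonality on conforming test functions and the weak-consistency bound
`|b♯(e, w_h)| ≤ D |w_h|_nc` on `V_h`, with `e := E − E_h`, `η := E − P E`,
`θ₀ := e − Π_K e`, one has
`|||θ₀|||♯² ≤ |||η − Π_K η|||♯² + 2 ω‖Π_K e‖ γ_div (‖C(P e)‖² + |P e|_nc²)^{1/2}
  + 2 |P e|_nc D + 4 ω² ‖θ₀‖²`. -/
theorem bound_on_tnormS_theta_zero
    {L M : Type*} [NormedAddCommGroup L] [InnerProductSpace ℝ L]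
    [NormedAddCommGroup M] [InnerProductSpace ℝ M]
    (ω : ℝ) (hω : 0 < ω)
    (Vs V Vh : Submodule ℝ L) (hVVs : V ≤ Vs) (hVhVs : Vh ≤ Vs)
    (C : L →ₗ[ℝ] M)
    (s : L →ₗ[ℝ] L →ₗ[ℝ] ℝ)
    (hs_symm : ∀ v w : L, s v w = s w v)
    (hs_pos : ∀ v : L, 0 ≤ s v v)
    (hs_conf : ∀ v w : L, v ∈ V ∨ w ∈ V → s v w = 0)
    (nc : L → ℝ)
    (hnc_nonneg : ∀ v : L, 0 ≤ nc v)
    (hnc_add : ∀ v w : L, nc (v + w) ≤ nc v + nc w)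
    (hnc_smul : ∀ (c : ℝ) (v : L), nc (c • v) = |c| * nc v)
    (hnc_conf : ∀ v ∈ V, nc v = 0)
    (projK : L →ₗ[ℝ] L)
    (hprojK_mem : ∀ v : L, projK v ∈ V ∧ C (projK v) = 0)
    (hprojK_orth : ∀ v : L, ∀ w ∈ V, C w = 0 → ⟪v - projK v, w⟫ = 0)
    (projKh : L →ₗ[ℝ] L)
    (hprojKh_mem : ∀ v : L, projKh v ∈ Vh ⊓ V ∧ C (projKh v) = 0)
    (hprojKh_orth : ∀ v : L, ∀ w ∈ Vh ⊓ V, C w = 0 → ⟪v - projKh v, w⟫ = 0)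
    (γdiv : ℝ) (hγdiv : 0 ≤ γdiv)
    (hdiv : ∀ vh ∈ Vh, projKh vh = 0 →
      ω * ‖projK vh‖ ≤ γdiv * Real.sqrt (‖C vh‖ ^ 2 + nc vh ^ 2))
    (P : L →ₗ[ℝ] L)
    (hP_mem : ∀ v : L, P v ∈ Vh)
    (hP_orth : ∀ v : L, ∀ wh ∈ Vh,
      ω ^ 2 * ⟪v - P v, wh⟫ + ⟪C (v - P v), C wh⟫ + s (v - P v) wh = 0)
    (E : L) (hE : E ∈ V) (Eh : L) (hEh : Eh ∈ Vh)
    (hGO : ∀ v ∈ Vh ⊓ V,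
      -ω ^ 2 * ⟪E - Eh, v⟫ + ⟪C (E - Eh), C v⟫ + s (E - Eh) v = 0)
    (D : ℝ) (hD : 0 ≤ D)
    (hweak : ∀ wh ∈ Vh,
      |(-ω ^ 2 * ⟪E - Eh, wh⟫ + ⟪C (E - Eh), C wh⟫ + s (E - Eh) wh)| ≤ D * nc wh) :
    ω ^ 2 * ‖(E - Eh) - projK (E - Eh)‖ ^ 2 + ‖C ((E - Eh) - projK (E - Eh))‖ ^ 2 +
        s ((E - Eh) - projK (E - Eh)) ((E - Eh) - projK (E - Eh)) ≤
      (ω ^ 2 * ‖(E - P E) - projK (E - P E)‖ ^ 2 +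
          ‖C ((E - P E) - projK (E - P E))‖ ^ 2 +
          s ((E - P E) - projK (E - P E)) ((E - P E) - projK (E - P E))) +
        2 * (ω * ‖projK (E - Eh)‖) *
          (γdiv * Real.sqrt (‖C (P (E - Eh))‖ ^ 2 + nc (P (E - Eh)) ^ 2)) +
        2 * nc (P (E - Eh)) * D +
        4 * ω ^ 2 * ‖(E - Eh) - projK (E - Eh)‖ ^ 2 := by
  obtain ⟨e, he⟩ : ∃ x, x = E - Eh := ⟨_, rfl⟩
  rw [← he] at hGO hweak ⊢
  obtain ⟨pe, hpe⟩ : ∃ x, x = P e := ⟨_, rfl⟩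
  rw [← hpe]
  obtain ⟨η, hη⟩ : ∃ x, x = E - P E := ⟨_, rfl⟩
  rw [← hη]
  obtain ⟨θ₀, hθ₀⟩ : ∃ x, x = e - projK e := ⟨_, rfl⟩
  rw [← hθ₀]
  obtain ⟨θη, hθη⟩ : ∃ x, x = η - projK η := ⟨_, rfl⟩
  rw [← hθη]
  obtain ⟨θd, hθd⟩ : ∃ x, x = pe - projK pe := ⟨_, rfl⟩
  -- P Eh = Eh
  have hPEh : P Eh = Eh := by
    have h := hP_orth Eh (Eh - P Eh) (Vh.sub_mem hEh (hP_mem Eh))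
    have h1 : (0:ℝ) ≤ ⟪Eh - P Eh, Eh - P Eh⟫ := real_inner_self_nonneg
    have h2 : (0:ℝ) ≤ ⟪C (Eh - P Eh), C (Eh - P Eh)⟫ := real_inner_self_nonneg
    have h3 := hs_pos (Eh - P Eh)
    have hω2 : (0:ℝ) < ω^2 := by positivity
    have h4 : ⟪Eh - P Eh, Eh - P Eh⟫ = (0:ℝ) := by nlinarith
    have h5 : Eh - P Eh = 0 := inner_self_eq_zero.mp h4
    rw [sub_eq_zero] at h5; exact h5.symm
  have hPe_eq : pe = e - η := by
    rw [hpe, hη, he, map_sub, hPEh]; abel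
  have he_split : e = η + pe := by rw [hPe_eq]; abel
  have hθ0_eq : θ₀ = θη + θd := by
    rw [hθ₀, hθη, hθd, he_split, map_add]; abel
  -- membership facts
  obtain ⟨hKe_V, hKe_C⟩ := hprojK_mem e
  obtain ⟨hKη_V, hKη_C⟩ := hprojK_mem η
  obtain ⟨hKPe_V, hKPe_C⟩ := hprojK_mem pe
  -- (1) split in second argument
  have hB1 : -ω^2*⟪θ₀,θ₀⟫ + ⟪C θ₀, C θ₀⟫ + s θ₀ θ₀
      = (-ω^2*⟪θ₀,θη⟫ + ⟪C θ₀, C θη⟫ + s θ₀ θη)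
        + (-ω^2*⟪θ₀,θd⟫ + ⟪C θ₀, C θd⟫ + s θ₀ θd) := by
    rw [hθ0_eq]
    simp only [inner_add_right, inner_add_left, map_add, LinearMap.add_apply]
    ring
  -- (2) B θ₀ θd = B e θd
  have hθd_projKe : ⟪projK e, θd⟫ = 0 := by
    have h := hprojK_orth pe (projK e) hKe_V hKe_C
    rw [← hθd] at h
    rw [real_inner_comm]; exact h
  have hB2 : -ω^2*⟪θ₀,θd⟫ + ⟪C θ₀, C θd⟫ + s θ₀ θd
      = -ω^2*⟪e,θd⟫ + ⟪C e, C θd⟫ + s e θd := by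
    rw [hθ₀]
    simp only [inner_sub_left, map_sub, LinearMap.sub_apply]
    rw [hθd_projKe, hKe_C, hs_conf (projK e) θd (Or.inl hKe_V)]
    simp
  -- (3) B e θd = B e pe + ω²⟪e, projK pe⟫
  have hB3 : -ω^2*⟪e,θd⟫ + ⟪C e, C θd⟫ + s e θd
      = (-ω^2*⟪e,pe⟫ + ⟪C e, C pe⟫ + s e pe) + ω^2*⟪e, projK pe⟫ := by
    rw [hθd]
    simp only [inner_sub_right, map_sub, LinearMap.sub_apply]
    rw [hKPe_C, hs_conf e (projK pe) (Or.inr hKPe_V)]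
    simp only [inner_zero_right]
    ring
  -- cross bounds
  have hinner : -⟪θ₀, θη⟫ ≤ (‖θ₀‖^2 + ‖θη‖^2)/2 := by
    have h := sq_nonneg (‖θ₀ + θη‖)
    rw [norm_add_sq_real] at h
    linarith
  have hcross : ⟪C θ₀, C θη⟫ + s θ₀ θη
      ≤ (‖C θ₀‖^2 + s θ₀ θ₀)/2 + (‖C θη‖^2 + s θη θη)/2 := by
    have h0 : (0:ℝ) ≤ ‖C (θ₀ - θη)‖^2 + s (θ₀ - θη) (θ₀ - θη) :=
      add_nonneg (sq_nonneg _) (hs_pos _)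
    rw [map_sub, norm_sub_sq_real] at h0
    simp only [map_sub, LinearMap.sub_apply] at h0
    have hsym := hs_symm θ₀ θη
    linarith
  have hω2 : (0:ℝ) < ω^2 := by positivity
  have hB4 : -ω^2*⟪θ₀,θη⟫ + ⟪C θ₀, C θη⟫ + s θ₀ θη
      ≤ (ω^2*‖θ₀‖^2 + ‖C θ₀‖^2 + s θ₀ θ₀)/2
        + (ω^2*‖θη‖^2 + ‖C θη‖^2 + s θη θη)/2 := by
    nlinarith [hinner, hcross, hω2.le]
  -- weak consistency
  have hB5 : -ω^2*⟪e,pe⟫ + ⟪C e, C pe⟫ + s e pe ≤ D * nc pe := by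
    have h := hweak pe (hpe ▸ hP_mem e)
    exact le_trans (le_abs_self _) h
  -- projKh pe = 0
  have horthKh : ∀ w ∈ Vh ⊓ V, C w = 0 → ⟪pe, w⟫ = 0 := by
    intro w hw hCw
    have h1 : ⟪e, w⟫ = 0 := by
      have h := hGO w hw
      rw [hCw, inner_zero_right, hs_conf e w (Or.inr hw.2)] at h
      have h' : ω^2 * ⟪e, w⟫ = 0 := by linarith
      exact (mul_eq_zero.mp h').resolve_left (by positivity)
    have h2 : ⟪η, w⟫ = 0 := by
      have h := hP_orth E w hw.1
      rw [← hη, hCw, inner_zero_right, hs_conf η w (Or.inr hw.2)] at h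
      have h' : ω^2 * ⟪η, w⟫ = 0 := by linarith
      exact (mul_eq_zero.mp h').resolve_left (by positivity)
    rw [hPe_eq, inner_sub_left, h1, h2, sub_zero]
  have hprojKh0 : projKh pe = 0 := by
    obtain ⟨hk_mem, hk_C⟩ := hprojKh_mem pe
    have h := hprojKh_orth pe (projKh pe) hk_mem hk_C
    rw [inner_sub_left, horthKh (projKh pe) hk_mem hk_C, zero_sub,
      neg_eq_zero] at h
    exact inner_self_eq_zero.mp h
  have hdivPe : ω * ‖projK pe‖ ≤ γdiv * Real.sqrt (‖C pe‖^2 + nc pe^2) :=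
    hdiv pe (hpe ▸ hP_mem e) hprojKh0
  -- ω²⟪e, projK pe⟫ bound
  have hB6 : ω^2*⟪e, projK pe⟫
      ≤ (ω * ‖projK e‖) * (γdiv * Real.sqrt (‖C pe‖^2 + nc pe^2)) := by
    have h1 : ⟪e, projK pe⟫ = ⟪projK e, projK pe⟫ := by
      have h := hprojK_orth e (projK pe) hKPe_V hKPe_C
      rw [inner_sub_left] at h; linarith
    have h2 : ⟪projK e, projK pe⟫ ≤ ‖projK e‖ * ‖projK pe‖ :=
      real_inner_le_norm _ _
    have h3 : ω^2*⟪e, projK pe⟫ ≤ (ω*‖projK e‖) * (ω*‖projK pe‖) := by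
      rw [h1]; nlinarith [hω2.le]
    have h4 : (ω*‖projK e‖) * (ω*‖projK pe‖)
        ≤ (ω*‖projK e‖) * (γdiv * Real.sqrt (‖C pe‖^2 + nc pe^2)) := by
      apply mul_le_mul_of_nonneg_left hdivPe
      positivity
    linarith
  have hself : ⟪θ₀, θ₀⟫ = ‖θ₀‖^2 := real_inner_self_eq_norm_sq θ₀
  have hCself : ⟪C θ₀, C θ₀⟫ = ‖C θ₀‖^2 := real_inner_self_eq_norm_sq _
  have key : ω^2*‖θ₀‖^2 + ‖C θ₀‖^2 + s θ₀ θ₀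
      = (-ω^2*⟪θ₀,θη⟫ + ⟪C θ₀, C θη⟫ + s θ₀ θη)
        + (-ω^2*⟪e,pe⟫ + ⟪C e, C pe⟫ + s e pe)
        + ω^2*⟪e, projK pe⟫ + 2*ω^2*‖θ₀‖^2 := by
    linear_combination hB1 + hB2 + hB3 + ω^2*hself - hCself
  linarith [key, hB4, hB5, hB6]
end

section
/- Let E ∈ V and E_h ∈ V_h, and set e := E − E_h. Assume: Galerkin orthogonality b♯(e, v) = 0 for all v ∈ V_h^c; the residual bound |b♯(e, v)| ≤ R |||v||| for all v ∈ V, for a constant R ≥ 0; and the nonconformity bound |E_h|_nc ≤ N, for a constant N ≥ 0. Then ω ‖e‖_L ≤ ((γ_p R + γ_d N)² + R²)^{1/2}; in particular ω ‖e‖_L ≤ (1 + γ_p) R + γ_d N. -/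
open scoped RealInnerProductSpace

set_option maxHeartbeats 1000000 in
/-- **`L²`-norm reliability estimate.**
Under Galerkin orthogonality on conforming test functions, the residual bound
`|b♯(e, v)| ≤ R |||v|||` on `V`, and the nonconformity bound `|E_h|_nc ≤ N`, one has
`ω ‖e‖_L ≤ ((γ_p R + γ_d N)² + R²)^{1/2}`, and in particular
`ω ‖e‖_L ≤ (1 + γ_p) R + γ_d N`, where `e := E − E_h`. -/
theorem L2_norm_reliability
    {L M : Type*} [NormedAddCommGroup L] [InnerProductSpace ℝ L]
    [NormedAddCommGroup M] [InnerProductSpace ℝ M]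
    (ω : ℝ) (hω : 0 < ω)
    (Vs V Vh : Submodule ℝ L) (hVVs : V ≤ Vs) (hVhVs : Vh ≤ Vs)
    (C : L →ₗ[ℝ] M)
    (s : L →ₗ[ℝ] L →ₗ[ℝ] ℝ)
    (hs_symm : ∀ v w : L, s v w = s w v)
    (hs_pos : ∀ v : L, 0 ≤ s v v)
    (hs_conf : ∀ v w : L, v ∈ V ∨ w ∈ V → s v w = 0)
    (nc : L → ℝ)
    (hnc_nonneg : ∀ v : L, 0 ≤ nc v)
    (hnc_add : ∀ v w : L, nc (v + w) ≤ nc v + nc w)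
    (hnc_smul : ∀ (c : ℝ) (v : L), nc (c • v) = |c| * nc v)
    (hnc_conf : ∀ v ∈ V, nc v = 0)
    (projK : L →ₗ[ℝ] L)
    (hprojK_mem : ∀ v : L, projK v ∈ V ∧ C (projK v) = 0)
    (hprojK_orth : ∀ v : L, ∀ w ∈ V, C w = 0 → ⟪v - projK v, w⟫ = 0)
    (γp γd : ℝ) (hγp : 0 ≤ γp) (hγd : 0 ≤ γd)
    (hadj : ∀ θ : L, (∀ w ∈ V, C w = 0 → ⟪θ, w⟫ = 0) →
      ∃ ζ ∈ V, (∀ w ∈ V, -ω ^ 2 * ⟪w, ζ⟫ + ⟪C w, C ζ⟫ = ⟪w, θ⟫) ∧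
        sInf {t : ℝ | ∃ v ∈ Vh ⊓ V, t = ω * tnorm ω C (ζ - v)} ≤ γp * ‖θ‖ ∧
        ∀ wh ∈ Vh,
          ω * |⟪wh, θ⟫ - (-ω ^ 2 * ⟪wh, ζ⟫ + ⟪C wh, C ζ⟫ + s wh ζ)| ≤
            γd * ‖θ‖ * nc wh)
    (E : L) (hE : E ∈ V) (Eh : L) (hEh : Eh ∈ Vh)
    (hGO : ∀ v ∈ Vh ⊓ V,
      -ω ^ 2 * ⟪E - Eh, v⟫ + ⟪C (E - Eh), C v⟫ + s (E - Eh) v = 0)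
    (R : ℝ) (hR : 0 ≤ R)
    (hres : ∀ v ∈ V,
      |(-ω ^ 2 * ⟪E - Eh, v⟫ + ⟪C (E - Eh), C v⟫ + s (E - Eh) v)| ≤
        R * tnorm ω C v)
    (N : ℝ) (hN : 0 ≤ N) (hnc_Eh : nc Eh ≤ N) :
    ω * ‖E - Eh‖ ≤ Real.sqrt ((γp * R + γd * N) ^ 2 + R ^ 2) ∧
    ω * ‖E - Eh‖ ≤ (1 + γp) * R + γd * N := by

  classical
  set e := E - Eh with he
  obtain ⟨hpV, hpC⟩ := hprojK_mem e
  set p := projK e with hp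
  set θ := e - p with hθdef
  have hθK : ∀ w ∈ V, C w = 0 → ⟪θ, w⟫ = 0 := fun w hw hcw => hprojK_orth e w hw hcw
  have hθp : ⟪θ, p⟫ = 0 := hprojK_orth e p hpV hpC
  -- tnorm of a curl-free element
  have htp : tnorm ω C p = ω * ‖p‖ := by
    rw [tnorm, hpC]
    rw [show ω ^ 2 * ‖p‖ ^ 2 + ‖(0 : M)‖ ^ 2 = (ω * ‖p‖) ^ 2 by simp; ring]
    exact Real.sqrt_sq (by positivity)
  -- Step 1: ω ‖p‖ ≤ R
  have hep : ⟪e, p⟫ = ‖p‖ ^ 2 := by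
    have h := hθp
    rw [hθdef, inner_sub_left] at h
    have := real_inner_self_eq_norm_sq p
    linarith
  have hstep1 : ω * ‖p‖ ≤ R := by
    have h1 := hres p hpV
    rw [hpC, htp] at h1
    have hsp : s e p = 0 := hs_conf _ _ (Or.inr hpV)
    rw [hsp, hep] at h1
    simp only [inner_zero_right, add_zero] at h1
    have h2 : ω ^ 2 * ‖p‖ ^ 2 ≤ R * (ω * ‖p‖) := by
      have := (abs_le.mp h1).1
      linarith
    have hx : (0:ℝ) ≤ ω * ‖p‖ := by positivity
    rcases eq_or_lt_of_le hx with h0 | h0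
    · linarith
    · have h3 : (ω * ‖p‖) * (ω * ‖p‖) ≤ R * (ω * ‖p‖) := by nlinarith [h2]
      exact le_of_mul_le_mul_right h3 h0
  -- Step 2
  obtain ⟨ζ, hζV, hζeq, hinf, hdual⟩ := hadj θ hθK
  -- B v := b♯(e, v)
  set B : L → ℝ := fun v => -ω ^ 2 * ⟪e, v⟫ + ⟪C e, C v⟫ + s e v with hB
  have hBsub : ∀ v w : L, B (v - w) = B v - B w := by
    intro v w
    simp only [hB, inner_sub_right, map_sub, LinearMap.sub_apply]
    ring
  have hBζ : ω * |B ζ| ≤ γp * R * ‖θ‖ := by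
    have hkey : ∀ t ∈ {t : ℝ | ∃ v ∈ Vh ⊓ V, t = ω * tnorm ω C (ζ - v)},
        ω * |B ζ| ≤ R * t := by
      rintro t ⟨v, hv, rfl⟩
      have hgo : B v = 0 := hGO v hv
      have : B ζ = B (ζ - v) := by rw [hBsub, hgo, sub_zero]
      rw [this]
      have hres' := hres (ζ - v) (sub_mem hζV hv.2)
      have : |B (ζ - v)| ≤ R * tnorm ω C (ζ - v) := hres'
      calc ω * |B (ζ - v)| ≤ ω * (R * tnorm ω C (ζ - v)) :=
            mul_le_mul_of_nonneg_left this hω.le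
        _ = R * (ω * tnorm ω C (ζ - v)) := by ring
    rcases eq_or_lt_of_le hR with hR0 | hRpos
    · have h0 := hkey (ω * tnorm ω C (ζ - 0)) ⟨0, zero_mem _, rfl⟩
      rw [← hR0] at h0 ⊢
      simp only [zero_mul, mul_zero] at h0 ⊢
      linarith
    · have hne : {t : ℝ | ∃ v ∈ Vh ⊓ V, t = ω * tnorm ω C (ζ - v)}.Nonempty :=
        ⟨ω * tnorm ω C (ζ - 0), 0, zero_mem _, rfl⟩
      have hlb : ω * |B ζ| / R ≤ sInf {t : ℝ | ∃ v ∈ Vh ⊓ V, t = ω * tnorm ω C (ζ - v)} := by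
        apply le_csInf hne
        intro t ht
        rw [div_le_iff₀ hRpos]
        calc ω * |B ζ| ≤ R * t := hkey t ht
          _ = t * R := by ring
      have := le_trans hlb hinf
      calc ω * |B ζ| = (ω * |B ζ| / R) * R := by field_simp
        _ ≤ (γp * ‖θ‖) * R := mul_le_mul_of_nonneg_right this hRpos.le
        _ = γp * R * ‖θ‖ := by ring
  have hdualEh : ω * |⟪Eh, θ⟫ - (-ω ^ 2 * ⟪Eh, ζ⟫ + ⟪C Eh, C ζ⟫ + s Eh ζ)| ≤ γd * N * ‖θ‖ := by
    have h := hdual Eh hEh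
    have : γd * ‖θ‖ * nc Eh ≤ γd * ‖θ‖ * N :=
      mul_le_mul_of_nonneg_left hnc_Eh (by positivity)
    calc ω * |⟪Eh, θ⟫ - (-ω ^ 2 * ⟪Eh, ζ⟫ + ⟪C Eh, C ζ⟫ + s Eh ζ)| ≤ γd * ‖θ‖ * nc Eh := h
      _ ≤ γd * ‖θ‖ * N := this
      _ = γd * N * ‖θ‖ := by ring
  -- key identity: ⟪e, θ⟫ = B ζ + ((-ω²⟪Eh,ζ⟫ + ⟪C Eh, C ζ⟫ + s Eh ζ) - ⟪Eh, θ⟫)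
  have hEθ : -ω ^ 2 * ⟪E, ζ⟫ + ⟪C E, C ζ⟫ = ⟪E, θ⟫ := hζeq E hE
  have hsE : s E ζ = 0 := hs_conf _ _ (Or.inl hE)
  have hkeyid : ⟪e, θ⟫ = B ζ + ((-ω ^ 2 * ⟪Eh, ζ⟫ + ⟪C Eh, C ζ⟫ + s Eh ζ) - ⟪Eh, θ⟫) := by
    have hBζ' : B ζ = -ω ^ 2 * ⟪e, ζ⟫ + ⟪C e, C ζ⟫ + s e ζ := rfl
    have h1 : ⟪e, ζ⟫ = ⟪E, ζ⟫ - ⟪Eh, ζ⟫ := by rw [he, inner_sub_left]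
    have h2 : ⟪C e, C ζ⟫ = ⟪C E, C ζ⟫ - ⟪C Eh, C ζ⟫ := by
      rw [he, map_sub, inner_sub_left]
    have h3 : s e ζ = s E ζ - s Eh ζ := by rw [he, map_sub]; rfl
    have h4 : ⟪e, θ⟫ = ⟪E, θ⟫ - ⟪Eh, θ⟫ := by rw [he, inner_sub_left]
    rw [hBζ', h1, h2, h3, h4, hsE, ← hEθ]
    ring
  have hθnorm : ⟪e, θ⟫ = ‖θ‖ ^ 2 := by
    have : e = p + θ := by rw [hθdef]; abel
    have hpθ : ⟪p, θ⟫ = 0 := by rw [real_inner_comm]; exact hθp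
    rw [this, inner_add_left, hpθ, real_inner_self_eq_norm_sq]
    ring
  have hstep2 : ω * ‖θ‖ ≤ γp * R + γd * N := by
    have hbound : ω * ‖θ‖ ^ 2 ≤ (γp * R + γd * N) * ‖θ‖ := by
      have h1 : ω * ⟪e, θ⟫ ≤ ω * |B ζ| + ω * |⟪Eh, θ⟫ - (-ω ^ 2 * ⟪Eh, ζ⟫ + ⟪C Eh, C ζ⟫ + s Eh ζ)| := by
        rw [hkeyid]
        have habs : B ζ + ((-ω ^ 2 * ⟪Eh, ζ⟫ + ⟪C Eh, C ζ⟫ + s Eh ζ) - ⟪Eh, θ⟫) ≤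
            |B ζ| + |⟪Eh, θ⟫ - (-ω ^ 2 * ⟪Eh, ζ⟫ + ⟪C Eh, C ζ⟫ + s Eh ζ)| := by
          have := le_abs_self (B ζ)
          have h2 := le_abs_self ((-ω ^ 2 * ⟪Eh, ζ⟫ + ⟪C Eh, C ζ⟫ + s Eh ζ) - ⟪Eh, θ⟫)
          rw [abs_sub_comm] at h2
          linarith
        nlinarith [hω.le]
      rw [hθnorm] at h1
      linarith [hBζ, hdualEh]
    rcases eq_or_lt_of_le (norm_nonneg θ) with h0 | h0
    · rw [← h0, mul_zero]; positivity
    · have h3 : (ω * ‖θ‖) * ‖θ‖ ≤ (γp * R + γd * N) * ‖θ‖ := by nlinarith [hbound]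
      exact le_of_mul_le_mul_right h3 h0
  -- Pythagoras and conclusion
  have hpyth : ‖e‖ ^ 2 = ‖p‖ ^ 2 + ‖θ‖ ^ 2 := by
    have he' : e = p + θ := by rw [hθdef]; abel
    have hpθ : ⟪p, θ⟫ = 0 := by rw [real_inner_comm]; exact hθp
    have h4 := norm_add_sq_real p θ
    rw [← he', hpθ] at h4
    linarith
  have hmain : (ω * ‖e‖) ^ 2 ≤ (γp * R + γd * N) ^ 2 + R ^ 2 := by
    have h1 : (ω * ‖e‖) ^ 2 = (ω * ‖p‖) ^ 2 + (ω * ‖θ‖) ^ 2 := by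
      rw [mul_pow, mul_pow, mul_pow, hpyth]; ring
    have h2 : (ω * ‖p‖) ^ 2 ≤ R ^ 2 :=
      pow_le_pow_left₀ (mul_nonneg hω.le (norm_nonneg p)) hstep1 2
    have h3 : (ω * ‖θ‖) ^ 2 ≤ (γp * R + γd * N) ^ 2 :=
      pow_le_pow_left₀ (mul_nonneg hω.le (norm_nonneg θ)) hstep2 2
    linarith
  have hfirst : ω * ‖e‖ ≤ Real.sqrt ((γp * R + γd * N) ^ 2 + R ^ 2) := by
    have := Real.sqrt_le_sqrt hmain
    rwa [Real.sqrt_sq (by positivity)] at this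
  refine ⟨hfirst, ?_⟩
  calc ω * ‖e‖ ≤ Real.sqrt ((γp * R + γd * N) ^ 2 + R ^ 2) := hfirst
    _ ≤ Real.sqrt (((γp * R + γd * N) + R) ^ 2) := by
        apply Real.sqrt_le_sqrt
        nlinarith [mul_nonneg (by positivity : (0:ℝ) ≤ γp * R + γd * N) hR]
    _ = (γp * R + γd * N) + R := Real.sqrt_sq (by positivity)
    _ = (1 + γp) * R + γd * N := by ring
end

section
/- Let E ∈ V and E_h ∈ V_h, and set e := E − E_h. Assume: the residual bound |b♯(e, v)| ≤ R |||v||| for all v ∈ V, for a constant R ≥ 0; the L²-error bound ω ‖e‖_L ≤ S, for a constant S ≥ 0; and that there exists E_h^av ∈ V with |||E_h − E_h^av||| ≤ A, for a constant A ≥ 0. Then the reliability bound |||e|||² ≤ (R + 2S)² + A² holds. -/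
open scoped RealInnerProductSpace

private lemma sq_le_of_le_mul {t c T : ℝ} (ht : 0 ≤ t) (hc : 0 ≤ c)
    (hT : T = t ^ 2) (h : T ≤ c * t) : T ≤ c ^ 2 := by nlinarith

set_option maxHeartbeats 1000000 in
/-- **Reliability of the a posteriori error estimator in the energy norm.**
With `e := E − E_h`, if `|b♯(e, v)| ≤ R |||v|||` for all `v ∈ V`, `ω ‖e‖_L ≤ S`, and
there exists `E_h^av ∈ V` with `|||E_h − E_h^av||| ≤ A`, then
`|||e|||² ≤ (R + 2S)² + A²`. -/
theorem energy_norm_reliability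
    {L M : Type*} [NormedAddCommGroup L] [InnerProductSpace ℝ L]
    [NormedAddCommGroup M] [InnerProductSpace ℝ M]
    (ω : ℝ) (hω : 0 < ω)
    (Vs V Vh : Submodule ℝ L) (hVVs : V ≤ Vs) (hVhVs : Vh ≤ Vs)
    (C : L →ₗ[ℝ] M)
    (s : L →ₗ[ℝ] L →ₗ[ℝ] ℝ)
    (hs_symm : ∀ v w : L, s v w = s w v)
    (hs_pos : ∀ v : L, 0 ≤ s v v)
    (hs_conf : ∀ v w : L, v ∈ V ∨ w ∈ V → s v w = 0)
    (PV : L →ₗ[ℝ] L)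
    (hPV_mem : ∀ v : L, PV v ∈ V)
    (hPV_orth : ∀ v : L, ∀ w ∈ V,
      ω ^ 2 * ⟪v - PV v, w⟫ + ⟪C (v - PV v), C w⟫ = 0)
    (E : L) (hE : E ∈ V) (Eh : L) (hEh : Eh ∈ Vh)
    (R : ℝ) (hR : 0 ≤ R)
    (hres : ∀ v ∈ V,
      |(-ω ^ 2 * ⟪E - Eh, v⟫ + ⟪C (E - Eh), C v⟫ + s (E - Eh) v)| ≤
        R * tnorm ω C v)
    (S : ℝ) (hS : 0 ≤ S) (hL2 : ω * ‖E - Eh‖ ≤ S)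
    (A : ℝ) (hA : 0 ≤ A)
    (Ehav : L) (hEhav : Ehav ∈ V) (hAbound : tnorm ω C (Eh - Ehav) ≤ A) :
    ω ^ 2 * ‖E - Eh‖ ^ 2 + ‖C (E - Eh)‖ ^ 2 ≤ (R + 2 * S) ^ 2 + A ^ 2 := by
  set e := E - Eh with he
  set p := PV e with hp
  set q := e - p with hq
  have hpV : p ∈ V := hPV_mem e
  have T_nonneg : ∀ v : L, 0 ≤ ω ^ 2 * ‖v‖ ^ 2 + ‖C v‖ ^ 2 := fun v => by positivity
  have tnorm_sq : ∀ v : L, tnorm ω C v ^ 2 = ω ^ 2 * ‖v‖ ^ 2 + ‖C v‖ ^ 2 := fun v =>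
    Real.sq_sqrt (T_nonneg v)
  have tnorm_nn : ∀ v : L, 0 ≤ tnorm ω C v := fun v => Real.sqrt_nonneg _
  have horth : ∀ w ∈ V, ω ^ 2 * ⟪q, w⟫ + ⟪C q, C w⟫ = 0 := fun w hw => hPV_orth e w hw
  -- expansion of the energy norm of a sum
  have expand : ∀ w : L, ω ^ 2 * ‖q + w‖ ^ 2 + ‖C (q + w)‖ ^ 2
      = (ω ^ 2 * ‖q‖ ^ 2 + ‖C q‖ ^ 2) + 2 * (ω ^ 2 * ⟪q, w⟫ + ⟪C q, C w⟫)
        + (ω ^ 2 * ‖w‖ ^ 2 + ‖C w‖ ^ 2) := by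
    intro w
    rw [map_add, norm_add_sq_real, norm_add_sq_real]; ring
  have hqp : q + p = e := by simp [hq]
  -- Pythagoras: T e = T q + T p
  have pyth : ω ^ 2 * ‖e‖ ^ 2 + ‖C e‖ ^ 2
      = (ω ^ 2 * ‖q‖ ^ 2 + ‖C q‖ ^ 2) + (ω ^ 2 * ‖p‖ ^ 2 + ‖C p‖ ^ 2) := by
    have := expand p
    rw [hqp, horth p hpV] at this
    linarith
  -- T p = b⁺(e, p)
  have hTp : ω ^ 2 * ‖p‖ ^ 2 + ‖C p‖ ^ 2 = ω ^ 2 * ⟪e, p⟫ + ⟪C e, C p⟫ := by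
    have h1 : ⟪e, p⟫ = ⟪q, p⟫ + ⟪p, p⟫ := by
      rw [← hqp, inner_add_left]
    have h2 : ⟪C e, C p⟫ = ⟪C q, C p⟫ + ⟪C p, C p⟫ := by
      rw [← hqp, map_add, inner_add_left]
    have h3 := horth p hpV
    rw [h1, h2, real_inner_self_eq_norm_sq, real_inner_self_eq_norm_sq]
    linarith
  -- bound T p ≤ (R + 2S) * tnorm p
  have hsep : s e p = 0 := hs_conf e p (Or.inr hpV)
  have hres' : |(-ω ^ 2 * ⟪e, p⟫ + ⟪C e, C p⟫ + s e p)| ≤ R * tnorm ω C p := hres p hpV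
  have hωp : ω * ‖p‖ ≤ tnorm ω C p := by
    have h1 : (ω * ‖p‖) ^ 2 ≤ ω ^ 2 * ‖p‖ ^ 2 + ‖C p‖ ^ 2 := by
      have : (ω * ‖p‖) ^ 2 = ω ^ 2 * ‖p‖ ^ 2 := by ring
      rw [this]; nlinarith [sq_nonneg ‖C p‖]
    calc ω * ‖p‖ = Real.sqrt ((ω * ‖p‖) ^ 2) := (Real.sqrt_sq (by positivity)).symm
      _ ≤ tnorm ω C p := Real.sqrt_le_sqrt h1
  have hinner : |⟪e, p⟫| ≤ ‖e‖ * ‖p‖ := abs_real_inner_le_norm e p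
  have hmain : ω ^ 2 * ‖p‖ ^ 2 + ‖C p‖ ^ 2 ≤ (R + 2 * S) * tnorm ω C p := by
    have key : ω ^ 2 * ⟪e, p⟫ + ⟪C e, C p⟫
        = (-ω ^ 2 * ⟪e, p⟫ + ⟪C e, C p⟫ + s e p) + 2 * ω ^ 2 * ⟪e, p⟫ := by
      rw [hsep]; ring
    have h2S : 2 * ω ^ 2 * ⟪e, p⟫ ≤ 2 * S * tnorm ω C p := by
      have h1 : 2 * ω ^ 2 * ⟪e, p⟫ ≤ 2 * (ω * ‖e‖) * (ω * ‖p‖) := by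
        have := (abs_le.mp hinner).2
        nlinarith [sq_nonneg ω, hω.le]
      have h2 : 2 * (ω * ‖e‖) * (ω * ‖p‖) ≤ 2 * S * tnorm ω C p := by
        have hωe : 0 ≤ ω * ‖e‖ := by positivity
        have hωp0 : 0 ≤ ω * ‖p‖ := by positivity
        nlinarith [tnorm_nn p]
      linarith
    have hR' := (abs_le.mp hres').2
    rw [hTp, key]
    linarith
  have hp_bound : ω ^ 2 * ‖p‖ ^ 2 + ‖C p‖ ^ 2 ≤ (R + 2 * S) ^ 2 :=
    sq_le_of_le_mul (tnorm_nn p) (by linarith) (tnorm_sq p).symm hmain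
  -- bound T q ≤ A²
  have hq_bound : ω ^ 2 * ‖q‖ ^ 2 + ‖C q‖ ^ 2 ≤ A ^ 2 := by
    set u := E - Ehav with hu
    have huV : u ∈ V := V.sub_mem hE hEhav
    have hpu : p - u ∈ V := V.sub_mem hpV huV
    have hsum : q + (p - u) = Ehav - Eh := by
      simp only [hq, he, hu]; abel
    have hexp := expand (p - u)
    rw [hsum, horth (p - u) hpu] at hexp
    have hEq : ω ^ 2 * ‖Ehav - Eh‖ ^ 2 + ‖C (Ehav - Eh)‖ ^ 2 ≤ A ^ 2 := by
      have hrev : ‖Ehav - Eh‖ = ‖Eh - Ehav‖ := norm_sub_rev _ _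
      have hrev2 : ‖C (Ehav - Eh)‖ = ‖C (Eh - Ehav)‖ := by
        rw [show Ehav - Eh = -(Eh - Ehav) by abel, map_neg, norm_neg]
      rw [hrev, hrev2, ← tnorm_sq]
      exact pow_le_pow_left₀ (tnorm_nn _) hAbound 2
    have := T_nonneg (p - u)
    linarith
  linarith
end
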